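/- For every u > 0 and v > 0, the functions g₁ and g₂ are differentiable at (u,v) and the determinant of the Jacobian matrix of the map (u,v) ↦ (g₁(u,v), g₂(u,v)), i.e. J(g₁,g₂)(u,v) = (∂g₁/∂u)(∂g₂/∂v) − (∂g₁/∂v)(∂g₂/∂u), is nonzero. -/

import Mathlib

open MeasureTheory Real

/-- The standard normal probability density function φ. -/
noncomputable def stdPhi (x : ℝ) : ℝ := Real.exp (-x ^ 2 / 2) / Real.sqrt (2 * Real.pi)

/-- The standard normal cumulative distribution function Φ. -/
noncomputable def stdCDF (x : ℝ) : ℝ := ∫ u in Set.Iic x, stdPhi u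

/-- The stationary first moment g₁(u,v) = u + (u/v)·φ(v)/(1 − Φ(−v)). -/
noncomputable def g1 (u v : ℝ) : ℝ := u + (u / v) * stdPhi v / (1 - stdCDF (-v))

/-- The stationary second moment
g₂(u,v) = u²/v² + u² + (u²/v)·φ(v)/(1 − Φ(−v)). -/
noncomputable def g2 (u v : ℝ) : ℝ :=
  u ^ 2 / v ^ 2 + u ^ 2 + (u ^ 2 / v) * stdPhi v / (1 - stdCDF (-v))

/-! ### Basic facts about `stdPhi` and `stdCDF` -/

lemma stdPhi_pos (x : ℝ) : 0 < stdPhi x :=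
  div_pos (Real.exp_pos _) (Real.sqrt_pos.2 (by positivity))

lemma continuous_stdPhi : Continuous stdPhi := by
  unfold stdPhi; fun_prop

lemma stdPhi_eq (x : ℝ) : stdPhi x = Real.exp (-(1/2) * x ^ 2) * (Real.sqrt (2 * Real.pi))⁻¹ := by
  rw [stdPhi, div_eq_mul_inv]; ring_nf

lemma integrable_stdPhi : Integrable stdPhi := by
  have h := (integrable_exp_neg_mul_sq (b := (1/2 : ℝ)) (by norm_num)).mul_const
    (Real.sqrt (2 * Real.pi))⁻¹
  have he : (fun x => Real.exp (-(1/2) * x ^ 2) * (Real.sqrt (2 * Real.pi))⁻¹) = stdPhi := by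
    funext x; rw [stdPhi_eq]
  rwa [he] at h

lemma integral_stdPhi : ∫ x, stdPhi x = 1 := by
  have h := integral_gaussian (1/2 : ℝ)
  have h2 : Real.sqrt (π / (1/2)) = Real.sqrt (2 * π) := by norm_num [mul_comm]
  rw [h2] at h
  have hs : (0:ℝ) < Real.sqrt (2 * π) := Real.sqrt_pos.2 (by positivity)
  calc ∫ x, stdPhi x = (∫ x, Real.exp (-(1/2) * x ^ 2)) * (Real.sqrt (2 * Real.pi))⁻¹ := by
        simp_rw [stdPhi_eq]; exact integral_mul_const _ _
    _ = 1 := by rw [h]; field_simp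

lemma stdPhi_even (x : ℝ) : stdPhi (-x) = stdPhi x := by simp [stdPhi]

lemma stdCDF_zero : stdCDF 0 = 1/2 := by
  have hsplit : stdCDF 0 + ∫ x in Set.Ioi (0:ℝ), stdPhi x = 1 := by
    rw [stdCDF, ← integral_stdPhi]
    exact intervalIntegral.integral_Iic_add_Ioi integrable_stdPhi.integrableOn
      integrable_stdPhi.integrableOn
  have hsym : stdCDF 0 = ∫ x in Set.Ioi (0:ℝ), stdPhi x := by
    rw [stdCDF]
    have := integral_comp_neg_Iic (0:ℝ) stdPhi
    simp_rw [stdPhi_even] at this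
    rw [this, neg_zero]
  linarith

lemma hasDerivAt_stdCDF (x : ℝ) : HasDerivAt stdCDF (stdPhi x) x := by
  have key : ∀ y, stdCDF y = stdCDF 0 + ∫ t in (0:ℝ)..y, stdPhi t := by
    intro y
    have := intervalIntegral.integral_Iic_sub_Iic (μ := volume) (a := (0:ℝ)) (b := y)
      integrable_stdPhi.integrableOn integrable_stdPhi.integrableOn
    rw [stdCDF, stdCDF]; linarith [this]
  have hd : HasDerivAt (fun y => stdCDF 0 + ∫ t in (0:ℝ)..y, stdPhi t) (stdPhi x) x := by
    have := intervalIntegral.integral_hasDerivAt_right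
      (f := stdPhi) (a := (0:ℝ)) (b := x)
      (integrable_stdPhi.intervalIntegrable)
      (continuous_stdPhi.stronglyMeasurable.stronglyMeasurableAtFilter)
      (continuous_stdPhi.continuousAt)
    exact (this.const_add (stdCDF 0))
  have hfun : stdCDF = fun y => stdCDF 0 + ∫ t in (0:ℝ)..y, stdPhi t := funext key
  rw [hfun]; exact hd

lemma hasDerivAt_stdPhi (x : ℝ) : HasDerivAt stdPhi (-x * stdPhi x) x := by
  have h1 : HasDerivAt (fun x : ℝ => -x ^ 2 / 2) (-x) x := by
    have := ((hasDerivAt_pow 2 x).neg.div_const 2)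
    refine HasDerivAt.congr_deriv this ?_
    push_cast; ring
  have h3 := h1.exp.div_const (Real.sqrt (2 * Real.pi))
  have he : (fun x : ℝ => Real.exp (-x ^ 2 / 2) / Real.sqrt (2 * Real.pi)) = stdPhi := rfl
  rw [he] at h3
  refine h3.congr_deriv ?_
  rw [stdPhi]; ring

/-! ### Bounds -/

lemma stdPhi_le_stdPhi {x y : ℝ} (h : x ^ 2 ≤ y ^ 2) : stdPhi y ≤ stdPhi x := by
  unfold stdPhi
  have hs : (0:ℝ) < Real.sqrt (2 * Real.pi) := Real.sqrt_pos.2 (by positivity)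
  exact (div_le_div_iff_of_pos_right hs).2 (Real.exp_le_exp.2 (by linarith))

lemma cdf_bound {v : ℝ} (hv : 0 < v) : 1/2 + v * stdPhi v ≤ 1 - stdCDF (-v) := by
  have hdiff : stdCDF 0 - stdCDF (-v) = ∫ x in Set.Ioc (-v) 0, stdPhi x := by
    have := intervalIntegral.integral_Iic_sub_Iic (μ := volume) (a := (-v)) (b := (0:ℝ))
      integrable_stdPhi.integrableOn integrable_stdPhi.integrableOn
    rw [stdCDF, stdCDF, this, intervalIntegral.integral_of_le (by linarith)]
  have hge : v * stdPhi v ≤ ∫ x in Set.Ioc (-v) 0, stdPhi x := by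
    have hc := MeasureTheory.setIntegral_ge_of_const_le (μ := volume)
      (s := Set.Ioc (-v) 0) (f := stdPhi) (c := stdPhi v)
      measurableSet_Ioc (by simp [Real.volume_Ioc])
      (fun x hx => stdPhi_le_stdPhi (by nlinarith [hx.1, hx.2]))
      integrable_stdPhi.integrableOn
    have hm : ((volume : Measure ℝ) (Set.Ioc (-v) 0)).toReal = v := by
      rw [Real.volume_Ioc]
      rw [ENNReal.toReal_ofReal (by linarith)]
      ring
    rw [Measure.real, hm, smul_eq_mul] at hc
    linarith [hc]
  have h0 := stdCDF_zero
  linarith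

lemma sqrt_two_pi_gt : (25066/10000 : ℝ) ≤ Real.sqrt (2 * Real.pi) := by
  rw [show (25066/10000:ℝ) = Real.sqrt ((25066/10000)^2) from (Real.sqrt_sq (by norm_num)).symm]
  apply Real.sqrt_le_sqrt
  nlinarith [Real.pi_gt_d6]

lemma series_le_exp (v : ℝ) : 1 + v^2/2 + v^4/8 + v^6/48 ≤ Real.exp (v^2/2) := by
  have h := Real.sum_le_exp_of_nonneg (x := v^2/2) (by positivity) 4
  have he : ∑ i ∈ Finset.range 4, (v^2/2)^i / (i.factorial : ℝ)
      = 1 + v^2/2 + v^4/8 + v^6/48 := by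
    simp [Finset.sum_range_succ, Nat.factorial]
    ring
  linarith [he ▸ h]

lemma hP_bound (v : ℝ) : (25066/10000 : ℝ) * ((1 + v^2/2 + v^4/8 + v^6/48) * stdPhi v) ≤ 1 := by
  have hs : (0:ℝ) < Real.sqrt (2 * Real.pi) := Real.sqrt_pos.2 (by positivity)
  have hse := series_le_exp v
  have hsp : (0:ℝ) < 1 + v^2/2 + v^4/8 + v^6/48 := by positivity
  have hD : Real.sqrt (2*Real.pi) * stdPhi v = Real.exp (-v^2/2) := by
    unfold stdPhi; field_simp
  have hC : Real.exp (v^2/2) * Real.exp (-v^2/2) = 1 := by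
    rw [← Real.exp_add]; ring_nf; exact Real.exp_zero
  calc (25066/10000 : ℝ) * ((1 + v^2/2 + v^4/8 + v^6/48) * stdPhi v)
      ≤ Real.sqrt (2*Real.pi) * ((1 + v^2/2 + v^4/8 + v^6/48) * stdPhi v) :=
        mul_le_mul_of_nonneg_right sqrt_two_pi_gt
          (mul_nonneg hsp.le (stdPhi_pos v).le)
    _ = (1 + v^2/2 + v^4/8 + v^6/48) * (Real.sqrt (2*Real.pi) * stdPhi v) := by ring
    _ = (1 + v^2/2 + v^4/8 + v^6/48) * Real.exp (-v^2/2) := by rw [hD]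
    _ ≤ Real.exp (v^2/2) * Real.exp (-v^2/2) :=
        mul_le_mul_of_nonneg_right hse (Real.exp_pos _).le
    _ = 1 := hC

/-! ### Polynomial lemmas -/

lemma h1poly (v : ℝ) (hv : 0 ≤ v) :
    0 < 2*((12533/10000)*(1+v^2/2+v^4/8+v^6/48) + v)^3
      - (3*v+v^3)*((12533/10000)*(1+v^2/2+v^4/8+v^6/48) + v)^2
      - (3+2*v^2)*((12533/10000)*(1+v^2/2+v^4/8+v^6/48) + v) - v := by
  nlinarith [sq_nonneg (v^2-v^3), sq_nonneg (v^4-v^5), sq_nonneg (v^5-v^6),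
    sq_nonneg (v^6-v^7), sq_nonneg (v^7-v^8), pow_nonneg hv 2, pow_nonneg hv 3,
    pow_nonneg hv 4, pow_nonneg hv 6, pow_nonneg hv 8, pow_nonneg hv 10,
    pow_nonneg hv 12, pow_nonneg hv 14, pow_nonneg hv 16, pow_nonneg hv 18, hv]

lemma h2poly (v : ℝ) (hv : 0 ≤ v) :
    0 ≤ 6*((12533/10000)*(1+v^2/2+v^4/8+v^6/48) + v)^2
      - (6*v+2*v^3)*((12533/10000)*(1+v^2/2+v^4/8+v^6/48) + v) - 3 - 2*v^2 := by
  nlinarith [sq_nonneg (v-v^2), sq_nonneg (v^2-v^3), sq_nonneg (v^3-v^4),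
    sq_nonneg (v^4-v^5), sq_nonneg (v^5-v^6), pow_nonneg hv 2, pow_nonneg hv 4,
    pow_nonneg hv 6, pow_nonneg hv 8, pow_nonneg hv 10, pow_nonneg hv 12, hv]

lemma h3poly (v : ℝ) (hv : 0 ≤ v) :
    3*v + v^3 ≤ 6*((12533/10000)*(1+v^2/2+v^4/8+v^6/48) + v) := by
  nlinarith [pow_nonneg hv 2, pow_nonneg hv 3, pow_nonneg hv 4, pow_nonneg hv 6, hv,
    sq_nonneg (v - v^2), sq_nonneg (v^2-v^3)]

lemma keyPoly (v M : ℝ) (hv : 0 ≤ v)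
    (hM : (12533/10000)*(1+v^2/2+v^4/8+v^6/48) + v ≤ M) :
    0 < 2*M^3 - (3*v+v^3)*M^2 - (3+2*v^2)*M - v := by
  set B := (12533/10000)*(1+v^2/2+v^4/8+v^6/48) + v with hB
  have h1 : 0 < 2*B^3 - (3*v+v^3)*B^2 - (3+2*v^2)*B - v := h1poly v hv
  have h2 : 0 ≤ 6*B^2 - (6*v+2*v^3)*B - 3 - 2*v^2 := h2poly v hv
  have h3 : 3*v + v^3 ≤ 6*B := h3poly v hv
  have hd : 0 ≤ M - B := by linarith
  clear_value B
  nlinarith [mul_nonneg hd h2,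
    mul_nonneg (mul_nonneg hd hd) (by linarith : (0:ℝ) ≤ 2*M + 4*B - 3*v - v^3)]

/-! ### Main theorem -/

/-- For every u > 0 and v > 0, the functions g₁ and g₂ are differentiable at (u,v) and
the determinant of the Jacobian of (u,v) ↦ (g₁(u,v), g₂(u,v)),
J(g₁,g₂) = (∂g₁/∂u)(∂g₂/∂v) − (∂g₁/∂v)(∂g₂/∂u), is nonzero. -/
theorem jacobian_g1_g2_ne_zero (u v : ℝ) (hu : 0 < u) (hv : 0 < v) :
    DifferentiableAt ℝ (fun p : ℝ × ℝ => g1 p.1 p.2) (u, v) ∧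
    DifferentiableAt ℝ (fun p : ℝ × ℝ => g2 p.1 p.2) (u, v) ∧
    deriv (fun u' => g1 u' v) u * deriv (fun v' => g2 u v') v -
        deriv (fun v' => g1 u v') v * deriv (fun u' => g2 u' v) u ≠ 0 := by
  set P := stdPhi v with hPdef
  set F := 1 - stdCDF (-v) with hFdef
  have hP0 : 0 < P := stdPhi_pos v
  have hFb : 1/2 + v * P ≤ F := cdf_bound hv
  have hF0 : 0 < F := by nlinarith [mul_pos hv hP0]
  -- derivative of v' ↦ 1 - stdCDF (-v')
  have dF : HasDerivAt (fun w : ℝ => 1 - stdCDF (-w)) P v := by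
    have h1 : HasDerivAt (fun w : ℝ => stdCDF (-w)) (stdPhi (-v) * (-1)) v :=
      (hasDerivAt_stdCDF (-v)).comp v (hasDerivAt_neg v)
    have h2 := h1.const_sub 1
    have he : -(stdPhi (-v) * (-1)) = P := by rw [stdPhi_even, hPdef]; ring
    rwa [he] at h2
  have dPhi := hasDerivAt_stdPhi v
  -- differentiability of the two-variable maps
  have hdF2 : DifferentiableAt ℝ (fun p : ℝ × ℝ => 1 - stdCDF (-p.2)) (u, v) := by
    have : DifferentiableAt ℝ (fun p : ℝ × ℝ => stdCDF (-p.2)) (u, v) :=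
      (hasDerivAt_stdCDF (-v)).differentiableAt.comp (f := fun p : ℝ × ℝ => -p.2) (u, v)
        (differentiableAt_snd.neg)
    exact (differentiableAt_const (1:ℝ)).sub this
  have hdP2 : DifferentiableAt ℝ (fun p : ℝ × ℝ => stdPhi p.2) (u, v) :=
    dPhi.differentiableAt.comp (f := fun p : ℝ × ℝ => p.2) (u, v) differentiableAt_snd
  have hfst : DifferentiableAt ℝ (fun p : ℝ × ℝ => p.1) (u, v) := differentiableAt_fst
  have hsnd : DifferentiableAt ℝ (fun p : ℝ × ℝ => p.2) (u, v) := differentiableAt_snd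
  have hsinv : DifferentiableAt ℝ (fun p : ℝ × ℝ => (p.2)⁻¹) (u, v) := hsnd.inv hv.ne'
  have hFinv : DifferentiableAt ℝ (fun p : ℝ × ℝ => (1 - stdCDF (-p.2))⁻¹) (u, v) :=
    hdF2.inv hF0.ne'
  have hd1 : DifferentiableAt ℝ (fun p : ℝ × ℝ => g1 p.1 p.2) (u, v) := by
    simp only [g1, div_eq_mul_inv]
    exact hfst.add (((hfst.mul hsinv).mul hdP2).mul hFinv)
  have hd2 : DifferentiableAt ℝ (fun p : ℝ × ℝ => g2 p.1 p.2) (u, v) := by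
    simp only [g2, div_eq_mul_inv]
    have e1 : DifferentiableAt ℝ (fun p : ℝ × ℝ => p.1 ^ 2) (u, v) := hfst.pow 2
    have e2 : DifferentiableAt ℝ (fun p : ℝ × ℝ => ((p.2 :ℝ) ^ 2)⁻¹) (u, v) :=
      (hsnd.pow 2).inv (pow_ne_zero 2 hv.ne')
    exact ((e1.mul e2).add e1).add (((e1.mul hsinv).mul hdP2).mul hFinv)
  refine ⟨hd1, hd2, ?_⟩
  -- the four partial derivatives
  have hg1u : deriv (fun u' => g1 u' v) u = 1 + 1/v * P / F := by
    have : HasDerivAt (fun u' => g1 u' v) (1 + 1/v * P / F) u := by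
      simp only [g1]
      exact (hasDerivAt_id u).add ((((hasDerivAt_id u).div_const v).mul_const P).div_const F)
    exact this.deriv
  have hg2u : deriv (fun u' => g2 u' v) u = 2*u/v^2 + 2*u + (2*u/v) * P / F := by
    have : HasDerivAt (fun u' => g2 u' v) (2*u/v^2 + 2*u + (2*u/v) * P / F) u := by
      simp only [g2]
      have h1 := ((hasDerivAt_pow 2 u).div_const (v^2)).add (hasDerivAt_pow 2 u)
      have h2 := (((hasDerivAt_pow 2 u).div_const v).mul_const P).div_const F
      have := h1.add h2
      refine HasDerivAt.congr_deriv this ?_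
      push_cast; ring
    exact this.deriv
  have hg1v : deriv (fun v' => g1 u v') v
      = (((-u/v^2)*P + (u/v)*(-v*P)) * F - (u/v*P) * P) / F^2 := by
    have hq : HasDerivAt (fun v' => u / v' * stdPhi v') ((-u/v^2)*P + (u/v)*(-v*P)) v := by
      have := ((hasDerivAt_const v u).div (hasDerivAt_id v) hv.ne').mul dPhi
      refine HasDerivAt.congr_deriv this ?_
      simp only [id, Pi.div_apply, hPdef]; ring
    have hdiv := hq.div dF hF0.ne'
    have : HasDerivAt (fun v' => g1 u v')
        ((((-u/v^2)*P + (u/v)*(-v*P)) * F - (u/v*P) * P) / F^2) v := by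
      simp only [g1]
      exact hdiv.const_add u
    exact this.deriv
  have hg2v : deriv (fun v' => g2 u v') v
      = -2*u^2/v^3 + (((-u^2/v^2)*P + (u^2/v)*(-v*P)) * F - (u^2/v*P) * P) / F^2 := by
    have hq : HasDerivAt (fun v' => u^2 / v' * stdPhi v')
        ((-u^2/v^2)*P + (u^2/v)*(-v*P)) v := by
      have := ((hasDerivAt_const v (u^2)).div (hasDerivAt_id v) hv.ne').mul dPhi
      refine HasDerivAt.congr_deriv this ?_
      simp only [id, Pi.div_apply, hPdef]; ring
    have hdiv := hq.div dF hF0.ne'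
    have hsq : HasDerivAt (fun v' : ℝ => u^2 / v'^2) (-2*u^2/v^3) v := by
      have := (hasDerivAt_const v (u^2)).div (hasDerivAt_pow 2 v) (pow_ne_zero 2 hv.ne')
      refine HasDerivAt.congr_deriv this ?_
      field_simp
      ring
    have : HasDerivAt (fun v' => g2 u v')
        (-2*u^2/v^3 + (((-u^2/v^2)*P + (u^2/v)*(-v*P)) * F - (u^2/v*P) * P) / F^2) v := by
      simp only [g2]
      exact (hsq.add_const (u^2)).add hdiv
    exact this.deriv
  rw [hg1u, hg2u, hg1v, hg2v]
  -- the key positivity fact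
  have hMle : (12533/10000)*(1+v^2/2+v^4/8+v^6/48) + v ≤ F / P := by
    rw [le_div_iff₀ hP0]
    have hb := hP_bound v
    nlinarith [mul_pos hv hP0]
  have hkp := keyPoly v (F/P) hv.le hMle
  have key : 0 < 2*F^3 - (3*v+v^3)*F^2*P - (3+2*v^2)*F*P^2 - v*P^3 := by
    have hmul := mul_pos hkp (pow_pos hP0 3)
    have keq : (2*(F/P)^3 - (3*v+v^3)*(F/P)^2 - (3+2*v^2)*(F/P) - v) * P^3
        = 2*F^3 - (3*v+v^3)*F^2*P - (3+2*v^2)*F*P^2 - v*P^3 := by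
      field_simp
    rwa [keq] at hmul
  -- rewrite the determinant in closed form
  have hdet : (1 + 1/v * P / F)
        * (-2*u^2/v^3 + (((-u^2/v^2)*P + (u^2/v)*(-v*P)) * F - (u^2/v*P) * P) / F^2)
      - (((-u/v^2)*P + (u/v)*(-v*P)) * F - (u/v*P) * P) / F^2
        * (2*u/v^2 + 2*u + (2*u/v) * P / F)
      = -(u^2 * (2*F^3 - (3*v+v^3)*F^2*P - (3+2*v^2)*F*P^2 - v*P^3)) / (v^3 * F^3) := by
    field_simp
    ring
  rw [hdet]
  have hnum : 0 < u^2 * (2*F^3 - (3*v+v^3)*F^2*P - (3+2*v^2)*F*P^2 - v*P^3) :=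
    mul_pos (pow_pos hu 2) key
  have hden : 0 < v^3 * F^3 := mul_pos (pow_pos hv 3) (pow_pos hF0 3)
  exact ne_of_lt (div_neg_of_neg_of_pos (neg_neg_of_pos hnum) hden)
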